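/- arXiv:0907.1609 — 3 statements merged into one kernel-verified Lean document; each statement's English description precedes it below -/
import Mathlib

section
/- Let α > 0, β > 0, T > 0 and 0 < γ < 1, set c = e^{−αT}, and let P : [0, β] → [0, β] be the map P(x) = γ·β·x / (x + (β − x)·c). If c < γ, then P has exactly two fixed points in [0, β], namely x = 0 and x* = β·(γ − c)/(1 − c), and 0 < x* < β. -/
/-- With `c = e^{−αT}` and `P(x) = γ·β·x / (x + (β − x)·c)`,
if `c < γ` then `P` has exactly two fixed points in `[0, β]`, namely `0` and
`x* = β·(γ − c)/(1 − c)`, and `0 < x* < β`. -/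
theorem logistic_poincare_fixed_points (α β T γ c : ℝ)
    (hα : 0 < α) (hβ : 0 < β) (hT : 0 < T) (hγ0 : 0 < γ) (hγ1 : γ < 1)
    (hc : c = Real.exp (-α * T)) (hcγ : c < γ)
    (P : ℝ → ℝ) (hP : ∀ x : ℝ, P x = γ * β * x / (x + (β - x) * c)) :
    (∀ x ∈ Set.Icc (0 : ℝ) β,
      (P x = x ↔ x = 0 ∨ x = β * (γ - c) / (1 - c))) ∧
    0 < β * (γ - c) / (1 - c) ∧ β * (γ - c) / (1 - c) < β := by
  have hc0 : 0 < c := hc ▸ Real.exp_pos _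
  have h1c : 0 < 1 - c := by linarith
  refine ⟨?_, ?_, ?_⟩
  · rintro x ⟨hx0, hxβ⟩
    have hD : 0 < x + (β - x) * c := by
      rcases lt_or_eq_of_le hx0 with h | h
      · nlinarith
      · nlinarith
    rw [hP x]
    constructor
    · intro h
      have h' : γ * β * x = x * (x + (β - x) * c) := by
        field_simp at h; linarith [h]
      rcases eq_or_lt_of_le hx0 with h0 | h0
      · exact Or.inl h0.symm
      · right
        have hkey : γ * β = x + (β - x) * c := by nlinarith [h']
        rw [eq_div_iff (ne_of_gt h1c)]
        nlinarith [hkey]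
    · rintro (h | h)
      · simp [h]
      · subst h
        rw [div_eq_iff (ne_of_gt hD)]
        field_simp
        ring
  · apply div_pos _ h1c
    nlinarith
  · rw [div_lt_iff₀ h1c]; nlinarith
end

section
/- Let α > 0, β > 0, T > 0 and 0 < γ < 1, set c = e^{−αT}, and assume c < γ. Let P : [0, β] → [0, β] be the map P(x) = γ·β·x / (x + (β − x)·c) and let x* = β·(γ − c)/(1 − c). Then for every initial value x₀ with 0 < x₀ ≤ β, the sequence of iterates x_{n+1} = P(x_n) converges to x* as n → ∞. In particular, the logistic dynamics with periodic resetting stabilize at the level x*, which differs from both equilibria 0 and β of the logistic equation without resetting. -/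
/-- With `c = e^{−αT} < γ` and
`P(x) = γ·β·x / (x + (β − x)·c)`, for every initial value `x₀ ∈ (0, β]` the
iterates `x_{n+1} = P(x_n)` converge to `x* = β·(γ − c)/(1 − c)`, which differs
from both equilibria `0` and `β` of the logistic equation without resetting. -/
theorem logistic_resetting_stabilizes (α β T γ c : ℝ)
    (hα : 0 < α) (hβ : 0 < β) (hT : 0 < T) (hγ0 : 0 < γ) (hγ1 : γ < 1)
    (hc : c = Real.exp (-α * T)) (hcγ : c < γ)
    (P : ℝ → ℝ) (hP : ∀ x : ℝ, P x = γ * β * x / (x + (β - x) * c))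
    (x : ℕ → ℝ) (hx0 : 0 < x 0) (hx0' : x 0 ≤ β)
    (hrec : ∀ n : ℕ, x (n + 1) = P (x n)) :
    Filter.Tendsto x Filter.atTop (nhds (β * (γ - c) / (1 - c))) ∧
    β * (γ - c) / (1 - c) ≠ 0 ∧ β * (γ - c) / (1 - c) ≠ β := by
  have hc0 : 0 < c := hc ▸ Real.exp_pos _
  have hc1 : c < 1 := by
    rw [hc]
    have : -α * T < 0 := by nlinarith
    calc Real.exp (-α * T) < Real.exp 0 := Real.exp_lt_exp.mpr this
    _ = 1 := Real.exp_zero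
  have hγc : 0 < γ - c := by linarith
  have h1c : 0 < 1 - c := by linarith
  -- positivity of all iterates
  have hxpos : ∀ n, 0 < x n := by
    intro n
    induction n with
    | zero => exact hx0
    | succ n ih =>
      rw [hrec, hP]
      have hden : 0 < x n + (β - x n) * c := by nlinarith
      positivity
  set r : ℝ := c / γ with hr
  have hr0 : 0 < r := div_pos hc0 hγ0
  have hr1 : r < 1 := (div_lt_one hγ0).mpr hcγ
  set u : ℝ := (1 - c) / (β * (γ - c)) with hu
  have hu0 : 0 < u := by positivity
  -- key recurrence for inverses
  have hstep : ∀ n, (x (n + 1))⁻¹ = r * (x n)⁻¹ + (1 - c) / (γ * β) := by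
    intro n
    have hxn := hxpos n
    have hden : 0 < x n + (β - x n) * c := by nlinarith
    rw [hrec, hP, hr]
    field_simp
    ring
  have hfix : u = r * u + (1 - c) / (γ * β) := by
    rw [hu, hr]
    field_simp
    ring
  have hgeo : ∀ n, (x n)⁻¹ - u = r ^ n * ((x 0)⁻¹ - u) := by
    intro n
    induction n with
    | zero => simp
    | succ n ih =>
      rw [hstep n, pow_succ]
      nlinarith [ih, hfix]
  -- convergence of inverses
  have htendu : Filter.Tendsto (fun n => (x n)⁻¹) Filter.atTop (nhds u) := by
    have h1 : Filter.Tendsto (fun n : ℕ => r ^ n * ((x 0)⁻¹ - u) + u)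
        Filter.atTop (nhds (0 * ((x 0)⁻¹ - u) + u)) := by
      exact ((tendsto_pow_atTop_nhds_zero_of_lt_one hr0.le hr1).mul_const _).add_const u
    simp only [zero_mul, zero_add] at h1
    convert h1 using 2 with n
    have := hgeo n
    linarith
  have hune : u ≠ 0 := ne_of_gt hu0
  have hxstar : u⁻¹ = β * (γ - c) / (1 - c) := by
    rw [hu]
    field_simp
  have hmain : Filter.Tendsto x Filter.atTop (nhds (β * (γ - c) / (1 - c))) := by
    rw [← hxstar]
    have := htendu.inv₀ hune
    convert this using 2 with n
    exact (inv_inv (x n)).symm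
  refine ⟨hmain, ?_, ?_⟩
  · have : 0 < β * (γ - c) / (1 - c) := by positivity
    exact ne_of_gt this
  · have : β * (γ - c) / (1 - c) < β := by
      rw [div_lt_iff₀ h1c]
      nlinarith
    exact ne_of_lt this
end

section
/- Let α > 0, β > 0, T > 0 and 0 < γ < 1, set c = e^{−αT}, and assume γ ≤ c. Let P : [0, β] → [0, β] be the map P(x) = γ·β·x / (x + (β − x)·c). Then for every initial value x₀ ∈ [0, β], the sequence of iterates x_{n+1} = P(x_n) converges to 0 as n → ∞. -/
/-- With `c = e^{−αT}` and `P(x) = γ·β·x / (x + (β − x)·c)`,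
if `γ ≤ c` then for every initial value `x₀ ∈ [0, β]` the iterates
`x_{n+1} = P(x_n)` converge to `0`. -/
theorem logistic_resetting_extinction (α β T γ c : ℝ)
    (hα : 0 < α) (hβ : 0 < β) (hT : 0 < T) (hγ0 : 0 < γ) (hγ1 : γ < 1)
    (hc : c = Real.exp (-α * T)) (hγc : γ ≤ c)
    (P : ℝ → ℝ) (hP : ∀ x : ℝ, P x = γ * β * x / (x + (β - x) * c))
    (x : ℕ → ℝ) (hx0 : x 0 ∈ Set.Icc (0 : ℝ) β)
    (hrec : ∀ n : ℕ, x (n + 1) = P (x n)) :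
    Filter.Tendsto x Filter.atTop (nhds 0) := by
  have hc0 : 0 < c := hc ▸ Real.exp_pos _
  have hc1 : c < 1 := by
    rw [hc]
    have : -α * T < 0 := by nlinarith
    calc Real.exp (-α * T) < Real.exp 0 := Real.exp_lt_exp.mpr this
      _ = 1 := Real.exp_zero
  -- one-step facts: P maps [0,β] into itself and decreases
  have hstep : ∀ y : ℝ, 0 ≤ y → y ≤ β → 0 ≤ P y ∧ P y ≤ y := by
    intro y h0 h1
    have hD : 0 < y + (β - y) * c := by nlinarith
    have hγβD : γ * β ≤ y + (β - y) * c := by nlinarith [mul_le_mul_of_nonneg_right hγc hβ.le]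
    constructor
    · rw [hP]; positivity
    · rw [hP, div_le_iff₀ hD]
      nlinarith [mul_le_mul_of_nonneg_left hγβD h0]
  have key : ∀ n : ℕ, x n ∈ Set.Icc (0 : ℝ) β ∧ x (n + 1) ≤ x n := by
    intro n
    induction n with
    | zero =>
      refine ⟨hx0, ?_⟩
      rw [hrec]
      exact (hstep _ hx0.1 hx0.2).2
    | succ n ih =>
      obtain ⟨⟨h0, h1⟩, hle⟩ := ih
      obtain ⟨hp0, hp1⟩ := hstep _ h0 h1
      have hmem : x (n + 1) ∈ Set.Icc (0 : ℝ) β := by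
        rw [hrec]; exact ⟨hp0, le_trans hp1 h1⟩
      refine ⟨hmem, ?_⟩
      rw [hrec (n + 1)]
      exact (hstep _ hmem.1 hmem.2).2
  have hmem : ∀ n, x n ∈ Set.Icc (0 : ℝ) β := fun n => (key n).1
  have hanti : Antitone x := antitone_nat_of_succ_le (fun n => (key n).2)
  have hbdd : BddBelow (Set.range x) := ⟨0, by rintro _ ⟨n, rfl⟩; exact (hmem n).1⟩
  set L := ⨅ n, x n with hLdef
  have hL : Filter.Tendsto x Filter.atTop (nhds L) := tendsto_atTop_ciInf hanti hbdd
  have hL0 : 0 ≤ L := le_ciInf (fun n => (hmem n).1)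
  have hLβ : L ≤ β := le_trans (ciInf_le hbdd 0) (hmem 0).2
  -- L is a fixed point of P
  have hDL : 0 < L + (β - L) * c := by nlinarith
  have hcont : ContinuousAt P L := by
    have hPe : P = fun y => γ * β * y / (y + (β - y) * c) := funext hP
    rw [hPe]
    exact ContinuousAt.div (by fun_prop) (by fun_prop) (ne_of_gt hDL)
  have h1 : Filter.Tendsto (fun n => x (n + 1)) Filter.atTop (nhds L) :=
    hL.comp (Filter.tendsto_add_atTop_nat 1)
  have h2 : Filter.Tendsto (fun n => P (x n)) Filter.atTop (nhds (P L)) :=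
    hcont.tendsto.comp hL
  have hfix : P L = L := by
    have : (fun n => x (n + 1)) = fun n => P (x n) := funext hrec
    rw [this] at h1
    exact tendsto_nhds_unique h2 h1
  have heq : γ * β * L = L * (L + (β - L) * c) := by
    rw [hP] at hfix
    field_simp at hfix
    linarith [hfix]
  have hLzero : L = 0 := by
    by_contra h
    have hpos : 0 < L := lt_of_le_of_ne hL0 (Ne.symm h)
    have h3 : γ * β * L ≤ c * β * L := by
      nlinarith [mul_le_mul_of_nonneg_right hγc (mul_nonneg hβ.le hL0)]
    nlinarith [h3, mul_pos hpos hpos]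
  rw [hLzero] at hL
  exact hL
end
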